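/- Consider the control affine system ẋ = f(x) + g(x)u on an open set D ⊆ ℝⁿ, with f : D → ℝⁿ and g : D → ℝ^{n×m} continuous, input constraint map U : D → Set(ℝ^m), and let h : D → ℝ be continuously differentiable with S = {x ∈ D : h(x) ≥ 0} nonempty. Suppose there exist a minimal function μ : ℝ → ℝ and a continuous feedback k : D → ℝ^m with k(x) ∈ U(x) and L_f h(x) + L_g h(x)·k(x) ≥ −μ(h(x)) for all x ∈ D. Then S is positively invariant for the closed-loop system ẋ = f(x) + g(x)k(x): every differentiable x : [0,τ) → D with ẋ(t) = f(x(t)) + g(x(t))k(x(t)) for all t and x(0) ∈ S satisfies x(t) ∈ S for all t ∈ [0,τ). -/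

import Mathlib

/-- A continuous function `μ : ℝ → ℝ` is a minimal function if for every `τ > 0`, every
differentiable `w : [0,τ) → ℝ` with `w(0) = 0` and `ẇ(t) = −μ(w(t))` satisfies `w(t) ≥ 0`. -/
def IsMinimalFunction (μ : ℝ → ℝ) : Prop :=
  Continuous μ ∧
    ∀ τ : ℝ, 0 < τ → ∀ w : ℝ → ℝ, w 0 = 0 →
      (∀ t ∈ Set.Ico (0 : ℝ) τ, HasDerivAt w (-μ (w t)) t) →
      ∀ t ∈ Set.Ico (0 : ℝ) τ, 0 ≤ w t

open Set Filter MeasureTheory intervalIntegral Topology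
open scoped ENNReal

lemma deriv_nonpos_of_lt_right {y : ℝ → ℝ} {d t₀ T : ℝ} (hd : HasDerivAt y d t₀)
    (hT : t₀ < T) (hlt : ∀ s ∈ Set.Ioc t₀ T, y s < y t₀) : d ≤ 0 := by
  have h1 : Tendsto (slope y t₀) (𝓝[>] t₀) (𝓝 d) :=
    (hasDerivAt_iff_tendsto_slope.mp hd).mono_left
      (nhdsWithin_mono _ (fun s hs => ne_of_gt hs))
  refine le_of_tendsto h1 ?_
  filter_upwards [Ioc_mem_nhdsGT_of_mem ⟨le_rfl, hT⟩] with s hs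
  have h2 : y s < y t₀ := hlt s hs
  have h3 : 0 < s - t₀ := by linarith [hs.1]
  rw [slope_def_field]
  exact div_nonpos_of_nonpos_of_nonneg (by linarith) h3.le

lemma claimA {μ : ℝ → ℝ} {y : ℝ → ℝ} {tm : ℝ} (htm : 0 ≤ tm)
    (hy : ∀ t ∈ Icc (0:ℝ) tm, ∃ d, HasDerivAt y d t ∧ -μ (y t) ≤ d)
    (hy0 : 0 ≤ y 0)
    {v : ℝ} (hv1 : y tm < v) (hv2 : v ≤ 0) : 0 ≤ μ v := by
  have hcont : ContinuousOn y (Icc 0 tm) := fun t ht =>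
    ((hy t ht).choose_spec.1.continuousAt).continuousWithinAt
  set A : Set ℝ := {t ∈ Icc (0:ℝ) tm | v ≤ y t} with hA
  have h0A : (0:ℝ) ∈ A := ⟨⟨le_rfl, htm⟩, le_trans hv2 hy0⟩
  have hAne : A.Nonempty := ⟨0, h0A⟩
  have hAbdd : BddAbove A := ⟨tm, fun t ht => ht.1.2⟩
  set t₂ := sSup A with ht₂def
  have ht₂mem : t₂ ∈ Icc (0:ℝ) tm := ⟨le_csSup hAbdd h0A, csSup_le hAne (fun t ht => ht.1.2)⟩
  -- y t₂ ≥ v by continuity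
  have hyt₂ : v ≤ y t₂ := by
    obtain ⟨u, hu_mono, hu_tendsto, hu_mem⟩ := exists_seq_tendsto_sSup hAne hAbdd
    have h1 : Tendsto (fun n => y (u n)) atTop (𝓝 (y t₂)) := by
      refine ((hcont t₂ ht₂mem).tendsto).comp ?_
      exact tendsto_nhdsWithin_of_tendsto_nhds_of_eventually_within _ hu_tendsto
        (Eventually.of_forall fun n => (hu_mem n).1)
    exact le_of_tendsto_of_tendsto tendsto_const_nhds h1
      (Eventually.of_forall fun n => (hu_mem n).2)
  have ht₂lt : t₂ < tm := by
    rcases lt_or_eq_of_le ht₂mem.2 with h | h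
    · exact h
    · exact absurd (h ▸ hyt₂) (not_le.mpr hv1)
  -- y t₂ = v
  have hyeq : y t₂ = v := by
    by_contra hne
    have hlt : v < y t₂ := lt_of_le_of_ne hyt₂ (Ne.symm hne)
    have hev : ∀ᶠ t in 𝓝[Icc 0 tm] t₂, v < y t :=
      (hcont t₂ ht₂mem).eventually (eventually_gt_nhds hlt)
    have hle : 𝓝[Ioc t₂ tm] t₂ ≤ 𝓝[Icc 0 tm] t₂ :=
      nhdsWithin_mono _ (fun s hs => ⟨le_trans ht₂mem.1 hs.1.le, hs.2⟩)
    have hne2 : (𝓝[Ioc t₂ tm] t₂).NeBot := by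
      rw [nhdsWithin_Ioc_eq_nhdsGT ht₂lt]
      infer_instance
    obtain ⟨t, ht1, ht2⟩ := ((hev.filter_mono hle).and eventually_mem_nhdsWithin).exists
    have : t ∈ A := ⟨⟨le_trans ht₂mem.1 ht2.1.le, ht2.2⟩, ht1.le⟩
    exact absurd (le_csSup hAbdd this) (not_le.mpr ht2.1)
  -- points after t₂ are below v
  have hafter : ∀ s ∈ Ioc t₂ tm, y s < y t₂ := by
    intro s hs
    rw [hyeq]
    by_contra hc
    have : s ∈ A := ⟨⟨le_trans ht₂mem.1 hs.1.le, hs.2⟩, not_lt.mp hc⟩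
    exact absurd (le_csSup hAbdd this) (not_le.mpr hs.1)
  obtain ⟨d, hd, hdge⟩ := hy t₂ ht₂mem
  have : d ≤ 0 := deriv_nonpos_of_lt_right hd ht₂lt hafter
  have := le_trans hdge this
  rw [hyeq] at this
  linarith

lemma claimB {m' : ℝ → ℝ} {tm : ℝ} {y : ℝ → ℝ} (hm : Continuous m')
    (hm0 : ∀ s, 0 ≤ m' s) (htm : 0 ≤ tm)
    (hy : ∀ t ∈ Icc (0:ℝ) tm, ∃ d, HasDerivAt y d t ∧ -m' (y t) ≤ d)
    {ε : ℝ} (hε : 0 < ε) : ∫ s in (y tm)..(y 0), (m' s + ε)⁻¹ ≤ tm := by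
  set G : ℝ → ℝ := fun s => (m' s + ε)⁻¹ with hG
  have hGc : Continuous G := by
    apply Continuous.inv₀ (hm.add continuous_const)
    intro s; have := hm0 s; show m' s + ε ≠ 0; positivity
  have hGpos : ∀ s, 0 < G s := fun s => by
    have := hm0 s
    have : 0 < m' s + ε := by linarith
    exact inv_pos.mpr this
  -- F v = ∫ 0..v G has derivative G v
  set F : ℝ → ℝ := fun v => ∫ s in (0:ℝ)..v, G s with hF
  have hFd : ∀ v, HasDerivAt F (G v) v := fun v =>
    intervalIntegral.integral_hasDerivAt_right (hGc.intervalIntegrable _ _)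
      (hGc.measurable.stronglyMeasurable.stronglyMeasurableAtFilter)
      hGc.continuousAt
  -- φ t = F (y t) + t is monotone on [0, tm]
  set φ : ℝ → ℝ := fun t => F (y t) + t with hφ
  have hφd : ∀ t ∈ Icc (0:ℝ) tm, ∃ d', HasDerivAt φ d' t ∧ 0 ≤ d' := by
    intro t ht
    obtain ⟨d, hd, hdge⟩ := hy t ht
    refine ⟨G (y t) * d + 1, ((hFd (y t)).comp t hd).add (hasDerivAt_id t) |>.congr_deriv ?_, ?_⟩
    · ring
    · have h1 : 0 < m' (y t) + ε := by have := hm0 (y t); positivity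
      have h2 : G (y t) * d ≥ G (y t) * (-m' (y t)) :=
        mul_le_mul_of_nonneg_left hdge (hGpos (y t)).le
      have h3 : G (y t) * (-m' (y t)) = -(m' (y t) / (m' (y t) + ε)) := by
        show (m' (y t) + ε)⁻¹ * (-m' (y t)) = _
        ring
      have h4 : m' (y t) / (m' (y t) + ε) ≤ 1 := by
        rw [div_le_one h1]; linarith
      nlinarith [hGpos (y t)]
  have hmono : MonotoneOn φ (Icc 0 tm) := by
    apply monotoneOn_of_deriv_nonneg (convex_Icc 0 tm)
    · exact fun t ht => ((hφd t ht).choose_spec.1.continuousAt).continuousWithinAt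
    · intro t ht
      rw [interior_Icc] at ht
      exact ((hφd t (Ioo_subset_Icc_self ht)).choose_spec.1.differentiableAt).differentiableWithinAt
    · intro t ht
      rw [interior_Icc] at ht
      obtain ⟨d', hd', hd'0⟩ := hφd t (Ioo_subset_Icc_self ht)
      rw [hd'.deriv]; exact hd'0
  have key : φ 0 ≤ φ tm := hmono ⟨le_rfl, htm⟩ ⟨htm, le_rfl⟩ htm
  have h5 : F (y 0) ≤ F (y tm) + tm := by simpa [hφ] using key
  have h6 : F (y 0) - F (y tm) = ∫ s in (y tm)..(y 0), G s := by
    rw [hF]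
    rw [← intervalIntegral.integral_interval_sub_left (hGc.intervalIntegrable _ _)
      (hGc.intervalIntegrable _ _)]
  linarith [h6 ▸ (by linarith : F (y 0) - F (y tm) ≤ tm)]

lemma claimC {m' : ℝ → ℝ} (hm : Continuous m') (hm0 : ∀ s, 0 ≤ m' s) {b tm : ℝ}
    (hb : 0 < b) (htm : 0 ≤ tm)
    (hbound : ∀ ε : ℝ, 0 < ε → ∫ s in (-b)..(0:ℝ), (m' s + ε)⁻¹ ≤ tm) :
    IntegrableOn (fun s => (m' s)⁻¹) (Set.Ioc (-b) 0) volume ∧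
      ∀ᵐ s ∂(volume.restrict (Set.Ioc (-b) (0:ℝ))), 0 < m' s := by
  set ν := volume.restrict (Set.Ioc (-b) (0:ℝ)) with hν
  set φ : ℕ → ℝ → ℝ≥0∞ := fun k s => ENNReal.ofReal ((m' s + ((k:ℝ)+1)⁻¹)⁻¹) with hφ
  have hεpos : ∀ k : ℕ, (0:ℝ) < ((k:ℝ)+1)⁻¹ := fun k => by positivity
  have hden : ∀ (k : ℕ) s, 0 < m' s + ((k:ℝ)+1)⁻¹ := fun k s => by
    have := hm0 s; have := hεpos k; linarith
  have hφmeas : ∀ k, Measurable (φ k) := by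
    intro k
    exact (ENNReal.continuous_ofReal.comp
      (((hm.add continuous_const).inv₀ (fun s => (hden k s).ne')))).measurable
  have hφmono : Monotone φ := by
    intro j k hjk s
    apply ENNReal.ofReal_le_ofReal
    apply inv_anti₀ (hden k s)
    have : ((k:ℝ)+1)⁻¹ ≤ ((j:ℝ)+1)⁻¹ := by
      apply inv_anti₀ (by positivity)
      exact_mod_cast Nat.add_le_add_right hjk 1
    linarith
  have hsup : ∀ s, (⨆ k, φ k s) = (ENNReal.ofReal (m' s))⁻¹ := by
    intro s
    rcases eq_or_lt_of_le (hm0 s) with h0 | hpos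
    · -- m' s = 0
      rw [← h0]
      rw [ENNReal.ofReal_zero, ENNReal.inv_zero]
      rw [eq_top_iff, top_le_iff, iSup_eq_top]
      intro c hc
      obtain ⟨k, hk⟩ := exists_nat_gt c.toReal
      refine ⟨k, ?_⟩
      have : φ k s = ENNReal.ofReal ((k:ℝ)+1) := by
        rw [hφ]; simp only [← h0, zero_add, inv_inv]
      rw [this, ENNReal.lt_ofReal_iff_toReal_lt hc.ne]
      linarith
    · -- m' s > 0
      have htend : Tendsto (fun k : ℕ => φ k s) atTop (𝓝 (ENNReal.ofReal (m' s)⁻¹)) := by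
        apply ENNReal.continuous_ofReal.continuousAt.tendsto.comp
        have h1 : Tendsto (fun k : ℕ => ((k:ℝ)+1)⁻¹) atTop (𝓝 0) := by
          have := tendsto_one_div_add_atTop_nhds_zero_nat (𝕜 := ℝ)
          simpa [one_div] using this
        have h2 : Tendsto (fun k : ℕ => m' s + ((k:ℝ)+1)⁻¹) atTop (𝓝 (m' s)) := by
          simpa using (tendsto_const_nhds.add h1)
        exact h2.inv₀ hpos.ne'
      rw [ENNReal.ofReal_inv_of_pos hpos] at htend
      exact tendsto_nhds_unique (tendsto_atTop_iSup (fun j k h => hφmono h s)) htend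
  have hstep : ∀ k : ℕ, ∫⁻ s, φ k s ∂ν ≤ ENNReal.ofReal tm := by
    intro k
    have hint : Integrable (fun s => (m' s + ((k:ℝ)+1)⁻¹)⁻¹) ν := by
      rw [hν]
      exact ((hm.add continuous_const).inv₀ (fun s => (hden k s).ne')).integrableOn_Ioc
    rw [← ofReal_integral_eq_lintegral_ofReal hint
      (Eventually.of_forall fun s => (inv_pos.mpr (hden k s)).le)]
    apply ENNReal.ofReal_le_ofReal
    have := hbound _ (hεpos k)
    rwa [intervalIntegral.integral_of_le (by linarith : -b ≤ (0:ℝ))] at this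
  have hkey : ∫⁻ s, (ENNReal.ofReal (m' s))⁻¹ ∂ν ≤ ENNReal.ofReal tm := by
    have : ∫⁻ s, (ENNReal.ofReal (m' s))⁻¹ ∂ν = ⨆ k, ∫⁻ s, φ k s ∂ν := by
      rw [← lintegral_iSup hφmeas hφmono]
      exact lintegral_congr fun s => (hsup s).symm
    rw [this]
    exact iSup_le hstep
  have hmeasφ : Measurable fun s => (ENNReal.ofReal (m' s))⁻¹ :=
    (ENNReal.continuous_ofReal.comp hm).measurable.inv
  have hae : ∀ᵐ s ∂ν, 0 < m' s := by
    have h1 : ∀ᵐ s ∂ν, (ENNReal.ofReal (m' s))⁻¹ < ⊤ :=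
      ae_lt_top hmeasφ (lt_of_le_of_lt hkey ENNReal.ofReal_lt_top).ne
    filter_upwards [h1] with s hs
    by_contra hc
    have h0 : m' s = 0 := le_antisymm (not_lt.mp hc) (hm0 s)
    rw [h0] at hs
    simp at hs
  refine ⟨?_, hae⟩
  constructor
  · exact (hm.measurable.inv.aestronglyMeasurable).restrict
  · rw [hasFiniteIntegral_iff_norm]
    have heq : ∀ᵐ s ∂ν, ENNReal.ofReal ‖(m' s)⁻¹‖ = (ENNReal.ofReal (m' s))⁻¹ := by
      filter_upwards [hae] with s hs
      rw [Real.norm_eq_abs, abs_of_nonneg (inv_nonneg.mpr (hm0 s)),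
        ENNReal.ofReal_inv_of_pos hs]
    calc ∫⁻ s, ENNReal.ofReal ‖(m' s)⁻¹‖ ∂ν = ∫⁻ s, (ENNReal.ofReal (m' s))⁻¹ ∂ν :=
          lintegral_congr_ae heq
      _ ≤ ENNReal.ofReal tm := hkey
      _ < ⊤ := ENNReal.ofReal_lt_top

lemma exists_bad_w {μ : ℝ → ℝ} {b : ℝ} (hb : 0 < b)
    (hμ0 : ∀ s ∈ Icc (-b) (0:ℝ), 0 ≤ μ s)
    (hint : IntegrableOn (fun s => (μ s)⁻¹) (Ioc (-b) 0) volume)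
    (hpos : ∀ᵐ s ∂(volume.restrict (Ioc (-b) (0:ℝ))), 0 < μ s)
    (hmin : IsMinimalFunction μ) : False := by
  obtain ⟨hμc, hminP⟩ := hmin
  have hb0 : -b ≤ (0:ℝ) := by linarith
  set G : ℝ → ℝ := fun s => (μ s)⁻¹ with hGdef
  -- upper bound on μ on [-b,0]
  obtain ⟨sC, hsC, hmax⟩ := isCompact_Icc.exists_isMaxOn
    (nonempty_Icc.mpr hb0) hμc.continuousOn
  set C := μ sC with hCdef
  have hC0 : 0 ≤ C := hμ0 sC hsC
  set c : ℝ := (C+1)⁻¹ with hcdef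
  have hc : 0 < c := by rw [hcdef]; positivity
  -- a.e. lower bound on G
  have hG_ae_lb : ∀ᵐ s ∂(volume.restrict (Ioc (-b) (0:ℝ))), c ≤ G s := by
    filter_upwards [hpos, ae_restrict_mem measurableSet_Ioc] with s h1 h2
    have hle : μ s ≤ C + 1 := by
      have h3 : μ s ≤ μ sC := hmax (Ioc_subset_Icc_self h2)
      rw [hCdef]; linarith
    exact inv_anti₀ h1 hle
  -- subinterval integrability
  have hsub : ∀ v ∈ Icc (-b) (0:ℝ), ∀ v' ∈ Icc (-b) (0:ℝ), IntervalIntegrable G volume v v' := by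
    intro v hv v' hv'
    rw [intervalIntegrable_iff]
    exact hint.mono_set (Ioc_subset_Ioc (le_min hv.1 hv'.1) (max_le hv.2 hv'.2))
  -- the lower integral bound
  have Ilb : ∀ p ∈ Icc (-b) (0:ℝ), ∀ q ∈ Icc (-b) (0:ℝ), p ≤ q →
      c * (q - p) ≤ ∫ s in p..q, G s := by
    intro p hp q hq hpq
    rw [intervalIntegral.integral_of_le hpq]
    have hss : Ioc p q ⊆ Ioc (-b) 0 := Ioc_subset_Ioc hp.1 hq.2
    calc c * (q - p) = ∫ _ in Ioc p q, c := by
          rw [setIntegral_const, Real.volume_real_Ioc_of_le hpq, smul_eq_mul]; ring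
      _ ≤ ∫ s in Ioc p q, G s := by
          apply setIntegral_mono_ae_restrict (integrableOn_const
            (by rw [Real.volume_Ioc]; exact ENNReal.ofReal_ne_top))
            (hint.mono_set hss)
          exact ae_restrict_of_ae_restrict_of_subset hss hG_ae_lb
  -- upper integral bound, when μ ≥ r > 0 on the interval
  have Iub : ∀ p ∈ Icc (-b) (0:ℝ), ∀ q ∈ Icc (-b) (0:ℝ), p ≤ q → ∀ r : ℝ, 0 < r →
      (∀ s ∈ Icc p q, r ≤ μ s) → ∫ s in p..q, G s ≤ (q - p) * r⁻¹ := by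
    intro p hp q hq hpq r hr hrle
    rw [intervalIntegral.integral_of_le hpq]
    have hss : Ioc p q ⊆ Ioc (-b) 0 := Ioc_subset_Ioc hp.1 hq.2
    calc ∫ s in Ioc p q, G s ≤ ∫ _ in Ioc p q, r⁻¹ := by
          apply setIntegral_mono_on (hint.mono_set hss)
            (integrableOn_const (by rw [Real.volume_Ioc]; exact ENNReal.ofReal_ne_top))
            measurableSet_Ioc
          intro s hs
          exact inv_anti₀ hr (hrle s (Ioc_subset_Icc_self hs))
      _ = (q - p) * r⁻¹ := by
          rw [setIntegral_const, Real.volume_real_Ioc_of_le hpq, smul_eq_mul]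
  -- lower integral bound, when μ ≤ r on the interval
  have Ilb2 : ∀ p ∈ Icc (-b) (0:ℝ), ∀ q ∈ Icc (-b) (0:ℝ), p ≤ q → ∀ r : ℝ, 0 < r →
      (∀ s ∈ Icc p q, μ s ≤ r) → (q - p) * r⁻¹ ≤ ∫ s in p..q, G s := by
    intro p hp q hq hpq r hr hrle
    rw [intervalIntegral.integral_of_le hpq]
    have hss : Ioc p q ⊆ Ioc (-b) 0 := Ioc_subset_Ioc hp.1 hq.2
    calc (q - p) * r⁻¹ = ∫ _ in Ioc p q, r⁻¹ := by
          rw [setIntegral_const, Real.volume_real_Ioc_of_le hpq, smul_eq_mul]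
      _ ≤ ∫ s in Ioc p q, G s := by
          apply setIntegral_mono_ae_restrict (integrableOn_const
            (by rw [Real.volume_Ioc]; exact ENNReal.ofReal_ne_top))
            (hint.mono_set hss)
          filter_upwards [ae_restrict_of_ae_restrict_of_subset hss hpos,
            ae_restrict_mem measurableSet_Ioc] with s h1 h2
          exact inv_anti₀ h1 (hrle s (Ioc_subset_Icc_self h2))
  -- the function T
  set T : ℝ → ℝ := fun v => ∫ s in v..0, G s with hTdef
  have Tdiff : ∀ v ∈ Icc (-b) (0:ℝ), ∀ v' ∈ Icc (-b) (0:ℝ),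
      T v - T v' = ∫ s in v..v', G s := by
    intro v hv v' hv'
    have h1 : (∫ s in v..v', G s) + ∫ s in v'..0, G s = ∫ s in v..0, G s :=
      integral_add_adjacent_intervals (hsub v hv v' hv')
        (hsub v' hv' 0 (right_mem_Icc.mpr hb0))
    rw [hTdef]; dsimp only; linarith
  have T0 : T 0 = 0 := integral_same
  set tau : ℝ := T (-b) with htaudef
  have htaupos : 0 < tau := by
    have h1 := Ilb (-b) (left_mem_Icc.mpr hb0) 0 (right_mem_Icc.mpr hb0) hb0
    have h2 := Tdiff (-b) (left_mem_Icc.mpr hb0) 0 (right_mem_Icc.mpr hb0)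
    rw [T0] at h2
    nlinarith
  -- strict antitonicity quantified
  have Tanti : ∀ v ∈ Icc (-b) (0:ℝ), ∀ v' ∈ Icc (-b) (0:ℝ), v ≤ v' →
      c * (v' - v) ≤ T v - T v' := by
    intro v hv v' hv' hle
    rw [Tdiff v hv v' hv']
    exact Ilb v hv v' hv' hle
  have Tinj : ∀ v ∈ Icc (-b) (0:ℝ), ∀ v' ∈ Icc (-b) (0:ℝ), T v = T v' → v = v' := by
    intro v hv v' hv' heq
    by_contra hne
    rcases lt_or_gt_of_ne hne with h | h
    · have := Tanti v hv v' hv' h.le; nlinarith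
    · have := Tanti v' hv' v hv h.le; nlinarith
  -- continuity of T
  have Tcont : ContinuousOn T (Icc (-b) 0) := by
    have hI : IntegrableOn G (uIcc (-b) 0) volume := by
      rw [uIcc_of_le hb0, integrableOn_Icc_iff_integrableOn_Ioc]
      exact hint
    have h1 : ContinuousOn (fun v => ∫ s in (-b)..v, G s) (uIcc (-b) 0) :=
      intervalIntegral.continuousOn_primitive_interval hI
    have h2 : ∀ v ∈ Icc (-b) (0:ℝ), T v = (∫ s in (-b)..(0:ℝ), G s) - ∫ s in (-b)..v, G s := by
      intro v hv
      have h3 : (∫ s in (-b)..v, G s) + ∫ s in v..0, G s = ∫ s in (-b)..0, G s :=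
        integral_add_adjacent_intervals (hsub (-b) (left_mem_Icc.mpr hb0) v hv)
          (hsub v hv 0 (right_mem_Icc.mpr hb0))
      rw [hTdef]; dsimp only; linarith
    rw [show Icc (-b) (0:ℝ) = uIcc (-b) 0 from (uIcc_of_le hb0).symm] at h2 ⊢
    exact (continuousOn_const.sub h1).congr h2
  -- surjectivity and W
  have hsurj : ∀ t ∈ Icc (0:ℝ) tau, ∃ v ∈ Icc (-b) (0:ℝ), T v = t := by
    intro t ht
    have h1 : Icc (T 0) (T (-b)) ⊆ T '' Icc (-b) 0 := intermediate_value_Icc' hb0 Tcont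
    rw [T0] at h1
    obtain ⟨v, hv, hTv⟩ := h1 ht
    exact ⟨v, hv, hTv⟩
  set W : ℝ → ℝ := fun t => if ht : t ∈ Icc (0:ℝ) tau then (hsurj t ht).choose else 0
    with hWdef
  have hW : ∀ t ∈ Icc (0:ℝ) tau, W t ∈ Icc (-b) (0:ℝ) ∧ T (W t) = t := by
    intro t ht
    rw [hWdef]; dsimp only; rw [dif_pos ht]
    exact ⟨(hsurj t ht).choose_spec.1, (hsurj t ht).choose_spec.2⟩
  have hW0 : W 0 = 0 := by
    have h1 := hW 0 (left_mem_Icc.mpr htaupos.le)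
    exact Tinj _ h1.1 0 (right_mem_Icc.mpr hb0) (by rw [h1.2, T0])
  have hWneg : ∀ t, 0 < t → t ≤ tau → W t < 0 := by
    intro t h0 hta
    have h1 := hW t ⟨h0.le, hta⟩
    rcases lt_or_eq_of_le h1.1.2 with h | h
    · exact h
    · exfalso
      have := h1.2
      rw [h, T0] at this
      linarith
  have hWlip : ∀ t ∈ Icc (0:ℝ) tau, ∀ t' ∈ Icc (0:ℝ) tau, c * |W t - W t'| ≤ |t - t'| := by
    have key : ∀ t ∈ Icc (0:ℝ) tau, ∀ t' ∈ Icc (0:ℝ) tau, W t' ≤ W t →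
        c * (W t - W t') ≤ t' - t := by
      intro t ht t' ht' hle
      have h1 := Tanti (W t') (hW t' ht').1 (W t) (hW t ht).1 hle
      rw [(hW t' ht').2, (hW t ht).2] at h1
      linarith
    intro t ht t' ht'
    rcases le_total (W t') (W t) with h | h
    · have h1 := key t ht t' ht' h
      rw [abs_of_nonneg (by linarith), abs_sub_comm]
      calc c * (W t - W t') ≤ t' - t := h1
        _ ≤ |t' - t| := le_abs_self _
    · have h1 := key t' ht' t ht h
      rw [abs_of_nonpos (by linarith)]
      calc c * -(W t - W t') = c * (W t' - W t) := by ring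
        _ ≤ t - t' := h1
        _ ≤ |t - t'| := le_abs_self _
  -- the derivative of W
  have hWd : ∀ t₀ ∈ Ico (0:ℝ) tau, HasDerivWithinAt W (-μ (W t₀)) (Icc 0 tau) t₀ := by
    intro t₀ ht₀
    have ht₀' : t₀ ∈ Icc (0:ℝ) tau := ⟨ht₀.1, ht₀.2.le⟩
    set v₀ := W t₀ with hv₀def
    have hv₀ : v₀ ∈ Icc (-b) (0:ℝ) := (hW t₀ ht₀').1
    set L := μ v₀ with hLdef
    have hL0 : 0 ≤ L := hμ0 v₀ hv₀
    rw [hasDerivWithinAt_iff_tendsto_slope, Metric.tendsto_nhdsWithin_nhds]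
    intro ε hε
    set ε' := ε/3 with hε'def
    have hε'pos : 0 < ε' := by positivity
    obtain ⟨δ₁, hδ₁, hδ₁P⟩ := Metric.continuousAt_iff.mp (hμc.continuousAt (x := v₀)) ε' hε'pos
    refine ⟨c * δ₁, by positivity, ?_⟩
    intro t ht hdist
    have ht' : t ∈ Icc (0:ℝ) tau := ht.1
    set v := W t with hvdef
    have hv : v ∈ Icc (-b) (0:ℝ) := (hW t ht').1
    have hTv : T v = t := (hW t ht').2
    have hTv₀ : T v₀ = t₀ := (hW t₀ ht₀').2
    have hvne : v ≠ v₀ := by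
      intro heq
      exact ht.2 (Set.mem_singleton_iff.mpr (by rw [← hTv, heq, hTv₀]))
    have htne : t ≠ t₀ := by simpa using ht.2
    have hvclose : |v - v₀| < δ₁ := by
      have h1 := hWlip t ht' t₀ ht₀'
      rw [Real.dist_eq] at hdist
      rw [← hvdef, ← hv₀def] at h1
      nlinarith
    set p := min v v₀ with hpdef
    set q := max v v₀ with hqdef
    have hpq : p < q := min_lt_max.mpr hvne
    have hp : p ∈ Icc (-b) (0:ℝ) := ⟨le_min hv.1 hv₀.1, le_trans (min_le_left _ _) hv.2⟩
    have hq : q ∈ Icc (-b) (0:ℝ) := ⟨le_trans hv.1 (le_max_left _ _), max_le hv.2 hv₀.2⟩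
    have hqp : q - p = |v - v₀| := by
      rcases le_total v v₀ with h | h
      · rw [hpdef, hqdef, min_eq_left h, max_eq_right h, abs_of_nonpos (by linarith)]; ring
      · rw [hpdef, hqdef, min_eq_right h, max_eq_left h, abs_of_nonneg (by linarith)]
    have hband : ∀ s ∈ Icc p q, |μ s - L| < ε' := by
      intro s hs
      have h1 : |s - v₀| < δ₁ := by
        have h2 : p ≤ v₀ := min_le_right _ _
        have h3 : v₀ ≤ q := le_max_right _ _
        have h4 : |s - v₀| ≤ q - p := by
          rw [abs_le]; constructor <;> [linarith [hs.1]; linarith [hs.2]]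
        rw [hqp] at h4
        exact lt_of_le_of_lt h4 hvclose
      have := hδ₁P (by rw [Real.dist_eq]; exact h1)
      rwa [Real.dist_eq] at this
    set I := ∫ s in p..q, G s with hIdef
    have hIlb0 : c * (q - p) ≤ I := Ilb p hp q hq hpq.le
    have hIpos : 0 < I := lt_of_lt_of_le (by nlinarith) hIlb0
    have hIub2 : (q - p) * (L + ε')⁻¹ ≤ I := by
      apply Ilb2 p hp q hq hpq.le (L + ε') (by linarith)
      intro s hs
      have := hband s hs
      rw [abs_lt] at this
      linarith [this.2]
    -- the slope equals -(q-p)/I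
    have hTdiffpq : T p - T q = I := by rw [hIdef]; exact Tdiff p hp q hq
    have hslope : slope W t₀ t = -((q - p) / I) := by
      rw [slope_def_field]
      rcases lt_or_gt_of_ne hvne with h | h
      · -- v < v₀ : p = v, q = v₀, t - t₀ = T v - T v₀ = I
        have hpv : p = v := min_eq_left h.le
        have hqv : q = v₀ := max_eq_right h.le
        have h2 : t - t₀ = I := by rw [← hTv, ← hTv₀, ← hTdiffpq, hpv, hqv]
        rw [← hvdef, ← hv₀def, h2, hpv, hqv, ← neg_div, neg_sub]
      · -- v₀ < v : p = v₀, q = v, t - t₀ = -I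
        have hpv : p = v₀ := min_eq_right h.le
        have hqv : q = v := max_eq_left h.le
        have h2 : t₀ - t = I := by rw [← hTv, ← hTv₀, ← hTdiffpq, hpv, hqv]
        have h3 : t - t₀ = -I := by linarith
        rw [← hvdef, ← hv₀def, h3, hpv, hqv, div_neg]
    set r := (q - p) / I with hrdef
    have hrpos : 0 < r := div_pos (by linarith) hIpos
    have hrub : r ≤ L + ε' := by
      rw [hrdef, div_le_iff₀ hIpos]
      have hne1 : L + ε' ≠ 0 := by linarith
      have h5 := mul_le_mul_of_nonneg_right hIub2 (show (0:ℝ) ≤ L + ε' by linarith)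
      rw [mul_assoc, inv_mul_cancel₀ hne1, mul_one] at h5
      linarith [mul_comm I (L + ε')]
    have hgoal : dist (slope W t₀ t) (-L) = |L - r| := by
      rw [hslope, Real.dist_eq, hrdef]
      rw [show -((q - p) / I) - -L = L - (q - p)/I by ring]
    rw [hgoal]
    rcases le_or_gt L (2 * ε') with h2 | h2
    · rw [abs_lt]
      constructor <;> [linarith; linarith]
    · have hIub : I ≤ (q - p) * (L - ε')⁻¹ := by
        apply Iub p hp q hq hpq.le (L - ε') (by linarith)
        intro s hs
        have := hband s hs
        rw [abs_lt] at this
        linarith [this.1]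
      have hrlb : L - ε' ≤ r := by
        rw [hrdef, le_div_iff₀ hIpos]
        have hne2 : L - ε' ≠ 0 := by linarith
        have h6 := mul_le_mul_of_nonneg_left hIub (show (0:ℝ) ≤ L - ε' by linarith)
        rw [mul_comm (q - p), ← mul_assoc, mul_inv_cancel₀ hne2, one_mul] at h6
        linarith
      rw [abs_lt]
      constructor <;> [linarith; linarith]
  -- construct the bad solution w
  set w : ℝ → ℝ := fun t => if t ≤ 0 then -μ 0 * t else W t with hwdef
  have hw0 : w 0 = 0 := by rw [hwdef]; simp
  have hwW : ∀ t : ℝ, 0 < t → w t = W t := by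
    intro t h; rw [hwdef]; simp only [if_neg (not_le.mpr h)]
  have hder : ∀ t ∈ Ico (0:ℝ) (tau/2), HasDerivAt w (-μ (w t)) t := by
    intro t₀ ht₀
    rcases eq_or_lt_of_le ht₀.1 with h0 | h0
    · -- t₀ = 0
      subst h0
      rw [hw0]
      have hleft : HasDerivWithinAt w (-μ 0) (Iic 0) 0 := by
        have hl : HasDerivAt (fun t : ℝ => -μ 0 * t) (-μ 0) 0 := by
          simpa using (hasDerivAt_id (0:ℝ)).const_mul (-μ 0)
        apply (hl.hasDerivWithinAt).congr
        · intro s hs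
          rw [hwdef]; simp only [if_pos (mem_Iic.mp hs)]
        · rw [hw0]; ring
      have hright : HasDerivWithinAt w (-μ 0) (Ici 0) 0 := by
        have h1 : HasDerivWithinAt W (-μ (W 0)) (Icc 0 tau) 0 :=
          hWd 0 ⟨le_rfl, htaupos⟩
        rw [hW0] at h1
        have h2 : HasDerivWithinAt W (-μ 0) (Ici 0) 0 := by
          apply h1.mono_of_mem_nhdsWithin
          have h3 : Iic tau ∩ Ici (0:ℝ) ∈ 𝓝[Ici 0] (0:ℝ) :=
            Filter.inter_mem (mem_nhdsWithin_of_mem_nhds (Iic_mem_nhds htaupos))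
              self_mem_nhdsWithin
          refine Filter.mem_of_superset h3 ?_
          intro s hs; exact ⟨hs.2, hs.1⟩
        apply h2.congr
        · intro s hs
          rcases eq_or_lt_of_le (mem_Ici.mp hs) with h | h
          · rw [← h, hw0, hW0]
          · exact hwW s h
        · rw [hw0, hW0]
      have := hleft.union hright
      rw [Iic_union_Ici] at this
      exact this.hasDerivAt (by simp)
    · -- 0 < t₀
      have ht₀tau : t₀ < tau := by linarith [ht₀.2]
      have h1 : HasDerivWithinAt W (-μ (W t₀)) (Icc 0 tau) t₀ :=
        hWd t₀ ⟨ht₀.1, ht₀tau⟩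
      have h2 : HasDerivAt W (-μ (W t₀)) t₀ :=
        h1.hasDerivAt (Icc_mem_nhds h0 ht₀tau)
      have h3 : w =ᶠ[𝓝 t₀] W := by
        filter_upwards [eventually_gt_nhds h0] with s hs
        exact hwW s hs
      rw [← hwW t₀ h0] at h2
      exact h2.congr_of_eventuallyEq h3
  have hconc := hminP (tau/2) (by linarith) w hw0 hder (tau/4)
    ⟨by linarith, by linarith⟩
  rw [hwW (tau/4) (by linarith)] at hconc
  exact absurd hconc (not_le.mpr (hWneg (tau/4) (by linarith) (by linarith)))

lemma comparison {μ : ℝ → ℝ} (hμ : IsMinimalFunction μ) {τ : ℝ} {y : ℝ → ℝ}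
    (hy : ∀ t ∈ Ico (0:ℝ) τ, ∃ d, HasDerivAt y d t ∧ -μ (y t) ≤ d)
    (hy0 : 0 ≤ y 0) : ∀ t ∈ Ico (0:ℝ) τ, 0 ≤ y t := by
  by_contra hcon
  push_neg at hcon
  obtain ⟨ts, hts, hyts⟩ := hcon
  have hsub : Icc (0:ℝ) ts ⊆ Ico 0 τ := fun s hs => ⟨hs.1, lt_of_le_of_lt hs.2 hts.2⟩
  have hy' : ∀ t ∈ Icc (0:ℝ) ts, ∃ d, HasDerivAt y d t ∧ -μ (y t) ≤ d :=
    fun t ht => hy t (hsub ht)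
  have hcont : ContinuousOn y (Icc 0 ts) := fun t ht =>
    ((hy' t ht).choose_spec.1.continuousAt).continuousWithinAt
  obtain ⟨tm, htm, hmin⟩ := isCompact_Icc.exists_isMinOn
    (nonempty_Icc.mpr hts.1) hcont
  have hytm : y tm ≤ y ts := hmin (right_mem_Icc.mpr hts.1)
  set b := -(y tm) with hbdef
  have hb : 0 < b := by rw [hbdef]; linarith
  have htm0 : 0 ≤ tm := htm.1
  have hytmb : y tm = -b := by rw [hbdef]; ring
  have hy'' : ∀ t ∈ Icc (0:ℝ) tm, ∃ d, HasDerivAt y d t ∧ -μ (y t) ≤ d :=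
    fun t ht => hy' t ⟨ht.1, le_trans ht.2 htm.2⟩
  -- μ ≥ 0 on Icc (-b) 0
  have hμc : Continuous μ := hμ.1
  have hμ0' : ∀ v ∈ Ioc (-b) (0:ℝ), 0 ≤ μ v := by
    intro v hv
    exact claimA htm0 hy'' hy0 (by rw [hytmb]; exact hv.1) hv.2
  have hμ0 : ∀ v ∈ Icc (-b) (0:ℝ), 0 ≤ μ v := by
    intro v hv
    rcases eq_or_lt_of_le hv.1 with h | h
    · -- v = -b : limit from the right
      rw [← h]
      have h1 : Tendsto μ (𝓝[>] (-b)) (𝓝 (μ (-b))) :=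
        (hμc.continuousAt).continuousWithinAt
      refine ge_of_tendsto h1 ?_
      filter_upwards [Ioc_mem_nhdsGT_of_mem (left_mem_Ico.mpr (by linarith : -b < (0:ℝ)))]
        with s hs
      exact hμ0' s hs
    · exact hμ0' v ⟨h, hv.2⟩
  -- the integral bound for the truncation m'
  set m' : ℝ → ℝ := fun s => max (μ s) 0 with hm'def
  have hm'c : Continuous m' := hμc.max continuous_const
  have hm'0 : ∀ s, 0 ≤ m' s := fun s => le_max_right _ _
  have hbound : ∀ ε : ℝ, 0 < ε → ∫ s in (-b)..(0:ℝ), (m' s + ε)⁻¹ ≤ tm := by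
    intro ε hε
    have hyb : ∀ t ∈ Icc (0:ℝ) tm, ∃ d, HasDerivAt y d t ∧ -m' (y t) ≤ d := by
      intro t ht
      obtain ⟨d, hd, hdge⟩ := hy'' t ht
      exact ⟨d, hd, le_trans (neg_le_neg (le_max_left _ _)) hdge⟩
    have h1 := claimB hm'c hm'0 htm0 hyb hε
    rw [hytmb] at h1
    have hic : ∀ u v : ℝ, IntervalIntegrable (fun s => (m' s + ε)⁻¹) volume u v := by
      intro u v
      apply Continuous.intervalIntegrable
      apply Continuous.inv₀ (hm'c.add continuous_const)
      intro s; have := hm'0 s; show m' s + ε ≠ 0; positivity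
    have h2 : (∫ s in (-b)..(0:ℝ), (m' s + ε)⁻¹) + ∫ s in (0:ℝ)..(y 0), (m' s + ε)⁻¹
        = ∫ s in (-b)..(y 0), (m' s + ε)⁻¹ :=
      integral_add_adjacent_intervals (hic _ _) (hic _ _)
    have h3 : 0 ≤ ∫ s in (0:ℝ)..(y 0), (m' s + ε)⁻¹ := by
      apply intervalIntegral.integral_nonneg hy0
      intro s _; have := hm'0 s; positivity
    linarith
  obtain ⟨hint', hpos'⟩ := claimC hm'c hm'0 hb htm0 hbound
  have hcongr : ∀ s ∈ Ioc (-b) (0:ℝ), m' s = μ s := fun s hs =>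
    max_eq_left (hμ0 s (Ioc_subset_Icc_self hs))
  have hint : IntegrableOn (fun s => (μ s)⁻¹) (Ioc (-b) 0) volume := by
    apply hint'.congr_fun _ measurableSet_Ioc
    intro s hs
    show (m' s)⁻¹ = (μ s)⁻¹
    rw [hcongr s hs]
  have hpos : ∀ᵐ s ∂(volume.restrict (Ioc (-b) (0:ℝ))), 0 < μ s := by
    filter_upwards [hpos', ae_restrict_mem measurableSet_Ioc] with s h1 h2
    rwa [hcongr s h2] at h1
  exact exists_bad_w hb hμ0 hint hpos hμ

/-- Theorem 4: for the control affine system `ẋ = f(x) + g(x)u` with a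
continuous feedback `k` satisfying the input constraints `k(x) ∈ U(x)` and the minimal
control barrier function condition `L_f h(x) + L_g h(x)·k(x) ≥ −μ(h(x))` on `D` for a
minimal function `μ`, the set `S = {x ∈ D : h(x) ≥ 0}` is positively invariant for the
closed-loop system `ẋ = f(x) + g(x)k(x)`. -/
theorem minimal_control_barrier_function_invariance
    {n m : ℕ} (D : Set (EuclideanSpace ℝ (Fin n))) (hD : IsOpen D)
    (f : EuclideanSpace ℝ (Fin n) → EuclideanSpace ℝ (Fin n)) (hf : ContinuousOn f D)
    (g : EuclideanSpace ℝ (Fin n) →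
      (EuclideanSpace ℝ (Fin m) →L[ℝ] EuclideanSpace ℝ (Fin n))) (hg : ContinuousOn g D)
    (U : EuclideanSpace ℝ (Fin n) → Set (EuclideanSpace ℝ (Fin m)))
    (h : EuclideanSpace ℝ (Fin n) → ℝ) (hh : ContDiffOn ℝ 1 h D)
    (hSne : ∃ x ∈ D, 0 ≤ h x)
    (μ : ℝ → ℝ) (hμ : IsMinimalFunction μ)
    (k : EuclideanSpace ℝ (Fin n) → EuclideanSpace ℝ (Fin m)) (hk : ContinuousOn k D)
    (hkU : ∀ x ∈ D, k x ∈ U x)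
    (hbar : ∀ x ∈ D, -μ (h x) ≤ fderiv ℝ h x (f x) + fderiv ℝ h x (g x (k x)))
    (τ : ℝ) (x : ℝ → EuclideanSpace ℝ (Fin n))
    (hxD : ∀ t ∈ Set.Ico (0 : ℝ) τ, x t ∈ D)
    (hxsol : ∀ t ∈ Set.Ico (0 : ℝ) τ, HasDerivAt x (f (x t) + g (x t) (k (x t))) t)
    (hx0 : 0 ≤ h (x 0)) :
    ∀ t ∈ Set.Ico (0 : ℝ) τ, 0 ≤ h (x t) := by
  have hy : ∀ t ∈ Set.Ico (0:ℝ) τ, ∃ d, HasDerivAt (fun s => h (x s)) d t ∧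
      -μ (h (x t)) ≤ d := by
    intro t ht
    have hmem : x t ∈ D := hxD t ht
    have hdiff : DifferentiableAt ℝ h (x t) :=
      (hh.contDiffAt (hD.mem_nhds hmem)).differentiableAt one_ne_zero
    refine ⟨fderiv ℝ h (x t) (f (x t) + g (x t) (k (x t))), ?_, ?_⟩
    · exact hdiff.hasFDerivAt.comp_hasDerivAt t (hxsol t ht)
    · rw [map_add]
      exact hbar (x t) hmem
  exact comparison hμ hy hx0
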